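/- Let φ̃ be an asymptotically harmonic map on the Poincaré metric g₊ = r^{-2}(dr² + g_r) over an even-dimensional conformal manifold (Mⁿ,[g]), with δ^{g₊}Tφ̃ = O(r²). Then the first normal derivative of φ̃ at r = 0 vanishes: φ^{(1)} := [∂_rφ̃]_{r=0} = 0. Moreover, for n ≠ 2, the second normal derivative is φ^{(2)} = (1/(2−n)) δ^g Tφ, where φ = φ̃|_{r=0}. -/

import Mathlib

/-!
STATEMENT 11: Let φ̃ be asymptotically harmonic on the Poincaré metric
g₊ = r^{-2}(dr²+g_r) over an even-dimensional (Mⁿ,[g]).  Then φ^{(1)} = [∂_rφ̃]_{r=0} = 0,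
and for n ≠ 2, φ^{(2)} = (1/(2−n))·δ^gTφ, where φ = φ̃|_{r=0}.

Model (at a fixed boundary point, values in a normed space V): the structural
identity for the g₊-tension field reads
  τ(r) = r²·(A(r) − t(r)·ψ(r) − Cov(r)) + (n−1)r·ψ(r),
where ψ(r) = ∂_rφ̃, A(r) = δ^{g_r}Tφ̃, t(r) = tr^{g_r}g_r'/2 (t(0)=0 from the
Fefferman–Graham expansion [∂_r g_r]_{r=0}=0), Cov(r) = ∇^h_{∂_rφ̃}∂_rφ̃ with
Cov(0) = φ^{(2)} (and also deriv ψ 0 = φ^{(2)}, the connection terms vanishing since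
ψ(0) = 0), and A(0) = δ^gTφ.  Asymptotic harmonicity gives τ = o(r²).
Conclusions: ψ(0) = 0 and, if n ≠ 2, φ^{(2)} = (1/(2−n))·δ^gTφ.
-/

open Topology Filter Asymptotics

theorem stmt_11 {V : Type*} [NormedAddCommGroup V] [NormedSpace ℝ V]
    (n : ℕ) (hn : 1 < n)
    (τ ψ A Cov : ℝ → V) (t : ℝ → ℝ)
    (hid : ∀ r : ℝ, τ r = r ^ 2 • (A r - t r • ψ r - Cov r) + (((n : ℝ) - 1) * r) • ψ r)
    (hτ : Asymptotics.IsLittleO (𝓝 (0 : ℝ)) τ (fun r => r ^ 2))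
    (hA : ContinuousAt A 0) (hψ : ContinuousAt ψ 0)
    (ht : ContinuousAt t 0) (hCov : ContinuousAt Cov 0)
    (ht0 : t 0 = 0)
    (δTφ φ2 : V) (hA0 : A 0 = δTφ) (hCov0 : Cov 0 = φ2)
    (hψd : HasDerivAt ψ φ2 0) :
    ψ 0 = 0 ∧ (n ≠ 2 → φ2 = ((1 : ℝ) / (2 - (n : ℝ))) • δTφ) := by
  have hn1 : ((n : ℝ) - 1) ≠ 0 := by
    have : (1 : ℝ) < (n : ℝ) := by exact_mod_cast hn
    linarith
  -- τ = o(r)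
  have hO : (fun r : ℝ => r ^ 2) =O[𝓝 (0:ℝ)] (fun r => r) := by
    rw [Asymptotics.isBigO_iff]
    refine ⟨1, ?_⟩
    have h1 : ∀ᶠ r : ℝ in 𝓝 0, |r - 0| < 1 := eventually_abs_sub_lt 0 one_pos
    filter_upwards [h1] with r hr
    have : |r| < 1 := by simpa using hr
    simp only [Real.norm_eq_abs, one_mul, pow_two, abs_mul]
    nlinarith [abs_nonneg r]
  have hτ1 : Asymptotics.IsLittleO (𝓝 (0 : ℝ)) τ (fun r => r) := hτ.trans_isBigO hO
  -- first limit
  have L1 : Tendsto (fun r : ℝ => r⁻¹ • τ r) (𝓝 0) (𝓝 0) :=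
    hτ1.tendsto_inv_smul_nhds_zero
  have L1' : Tendsto (fun r : ℝ => r⁻¹ • τ r) (𝓝[≠] (0:ℝ)) (𝓝 0) :=
    L1.mono_left nhdsWithin_le_nhds
  -- RHS form on punctured nbhd
  have hrhs1 : Tendsto (fun r : ℝ => r • (A r - t r • ψ r - Cov r) + ((n : ℝ) - 1) • ψ r)
      (𝓝[≠] (0:ℝ)) (𝓝 (((n : ℝ) - 1) • ψ 0)) := by
    have hone : Tendsto (fun r : ℝ => r • (A r - t r • ψ r - Cov r)) (𝓝 (0:ℝ))
        (𝓝 ((0:ℝ) • (A 0 - t 0 • ψ 0 - Cov 0))) := by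
      exact (continuousAt_id.smul ((hA.sub (ht.smul hψ)).sub hCov))
    have htwo : Tendsto (fun r : ℝ => ((n : ℝ) - 1) • ψ r) (𝓝 (0:ℝ))
        (𝓝 (((n : ℝ) - 1) • ψ 0)) := hψ.const_smul _
    have := hone.add htwo
    simpa using this.mono_left nhdsWithin_le_nhds
  have heq1 : ∀ r ∈ ({(0:ℝ)}ᶜ : Set ℝ), r⁻¹ • τ r
      = r • (A r - t r • ψ r - Cov r) + ((n : ℝ) - 1) • ψ r := by
    intro r hr
    have hr0 : r ≠ 0 := hr
    rw [hid r, smul_add, smul_smul, smul_smul]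
    congr 1
    · congr 1; field_simp
    · congr 1; field_simp
  have L1'' : Tendsto (fun r : ℝ => r⁻¹ • τ r) (𝓝[≠] (0:ℝ)) (𝓝 (((n : ℝ) - 1) • ψ 0)) := by
    refine hrhs1.congr' ?_
    filter_upwards [self_mem_nhdsWithin] with r hr
    exact (heq1 r hr).symm
  have hψ0 : ψ 0 = 0 := by
    have := tendsto_nhds_unique L1'' L1'
    have h := smul_eq_zero.mp this
    rcases h with h | h
    · exact absurd h hn1
    · exact h
  refine ⟨hψ0, fun hn2 => ?_⟩
  -- second limit
  have L2 : Tendsto (fun r : ℝ => (r ^ 2)⁻¹ • τ r) (𝓝[≠] (0:ℝ)) (𝓝 0) :=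
    hτ.tendsto_inv_smul_nhds_zero.mono_left nhdsWithin_le_nhds
  have hslope : Tendsto (fun r : ℝ => r⁻¹ • ψ r) (𝓝[≠] (0:ℝ)) (𝓝 φ2) := by
    have := hasDerivAt_iff_tendsto_slope.mp hψd
    refine this.congr ?_
    intro r
    simp [slope, hψ0]
  have hrhs2 : Tendsto (fun r : ℝ => (A r - t r • ψ r - Cov r) + ((n : ℝ) - 1) • (r⁻¹ • ψ r))
      (𝓝[≠] (0:ℝ)) (𝓝 ((A 0 - t 0 • ψ 0 - Cov 0) + ((n : ℝ) - 1) • φ2)) := by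
    have hone : Tendsto (fun r : ℝ => A r - t r • ψ r - Cov r) (𝓝[≠] (0:ℝ))
        (𝓝 (A 0 - t 0 • ψ 0 - Cov 0)) :=
      (((hA.sub (ht.smul hψ)).sub hCov)).tendsto.mono_left nhdsWithin_le_nhds
    exact hone.add (hslope.const_smul _)
  have heq2 : ∀ᶠ r in (𝓝[≠] (0:ℝ)), (r ^ 2)⁻¹ • τ r
      = (A r - t r • ψ r - Cov r) + ((n : ℝ) - 1) • (r⁻¹ • ψ r) := by
    filter_upwards [self_mem_nhdsWithin] with r hr
    have hr0 : (r : ℝ) ≠ 0 := hr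
    rw [hid r, smul_add, smul_smul, smul_smul, smul_smul]
    congr 1
    · field_simp; rw [one_smul]
    · congr 1; field_simp
  have L2' := tendsto_nhds_unique (hrhs2.congr' (heq2.mono fun r h => h.symm)) L2
  -- L2' : (A 0 - t 0 • ψ 0 - Cov 0) + ((n:ℝ)-1) • φ2 = 0
  rw [hA0, ht0, hψ0, hCov0] at L2'
  have hne : (2 - (n : ℝ)) ≠ 0 := by
    intro h
    apply hn2
    have : (n : ℝ) = 2 := by linarith
    exact_mod_cast this
  have key : (2 - (n : ℝ)) • φ2 = δTφ := by
    have h0 : δTφ - φ2 + ((n : ℝ) - 1) • φ2 = 0 := by simpa using L2'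
    have h' : (2 - (n : ℝ)) • φ2 - δTφ = -(δTφ - φ2 + ((n : ℝ) - 1) • φ2) := by module
    rw [h0, neg_zero] at h'
    exact sub_eq_zero.mp h'
  rw [← key, one_div, smul_smul, inv_mul_cancel₀ hne, one_smul]
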